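/- Let M = (S¹ × S¹) × (ℝ × ℝ), where S¹ is the unit circle in ℂ. Then there do not exist a topological space N, points b ∈ M and r ∈ N, a function f : M → N, and a continuous map φ : M × M × N → M × M × N homotopic to the identity map of M × M × N with φ(x, b, r) = (x, x, f x) for all x ∈ M. -/

import Mathlib

open Complex
local notation "𝕀" => unitInterval

noncomputable abbrev sCirc := Metric.sphere (0 : ℂ) 1

noncomputable def eC (s : ℝ) : sCirc :=
  ⟨Complex.exp ((2 * Real.pi * s : ℝ) * Complex.I), by
    rw [Metric.mem_sphere, dist_zero_right]
    exact Complex.norm_exp_ofReal_mul_I _⟩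

lemma eC_cont : Continuous eC := by
  apply Continuous.subtype_mk
  fun_prop

lemma eC_one : eC 1 = eC 0 := by
  have : Complex.exp ((2 * Real.pi * 1 : ℝ) * Complex.I)
      = Complex.exp ((2 * Real.pi * 0 : ℝ) * Complex.I) := by
    rw [Complex.exp_eq_exp_iff_exists_int]
    exact ⟨1, by push_cast; ring⟩
  exact Subtype.ext this

lemma circle_not_contractible (c : sCirc) :
    ¬ (ContinuousMap.id sCirc).Homotopic (ContinuousMap.const sCirc c) := by
  rintro ⟨K⟩
  set G : C(𝕀 × 𝕀, ℂ) :=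
    ⟨fun p => (K (p.2, eC p.1) : ℂ), by
      have : Continuous fun p : 𝕀 × 𝕀 => K (p.2, eC p.1) := by
        apply K.continuous.comp
        exact continuous_snd.prodMk
          (eC_cont.comp (continuous_subtype_val.comp continuous_fst))
      exact continuous_subtype_val.comp this⟩ with hGdef
  have hGapp : ∀ p : 𝕀 × 𝕀, G p = (K (p.2, eC p.1) : ℂ) := fun p => rfl
  have hGabs : ∀ p : 𝕀 × 𝕀, ‖G p‖ = 1 := by
    intro p
    rw [hGapp]
    have h2 := (K (p.2, eC p.1)).2
    rw [Metric.mem_sphere, dist_zero_right] at h2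
    exact h2
  have hUC : UniformContinuous G := CompactSpace.uniformContinuous_of_continuous G.continuous
  obtain ⟨δ, hδ, hd⟩ := Metric.uniformContinuous_iff.mp hUC 2 two_pos
  obtain ⟨n, hn⟩ := exists_nat_one_div_lt hδ
  set N : ℕ := n + 2 with hN
  have hN2 : 2 ≤ N := by omega
  have hNpos : (0 : ℝ) < N := by positivity
  have hinv : (1 : ℝ) / N < δ := by
    refine lt_of_le_of_lt (one_div_le_one_div_of_le (by positivity) ?_) hn
    rw [hN]; push_cast; linarith
  have hmem : ∀ k : ℕ, min ((k : ℝ) / N) 1 ∈ unitInterval := by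
    intro k
    exact ⟨le_min (by positivity) zero_le_one, min_le_right _ _⟩
  set sk : ℕ → 𝕀 := fun k => ⟨min ((k : ℝ) / N) 1, hmem k⟩ with hsk
  have hskval : ∀ k ≤ N, (sk k : ℝ) = k / N := by
    intro k hk
    simp only [hsk]
    exact min_eq_left (by rw [div_le_one hNpos]; exact_mod_cast hk)
  set a : ℕ → 𝕀 → ℂ := fun k t => G (sk k, t) with ha
  have habs : ∀ k t, ‖a k t‖ = 1 := fun k t => hGabs _
  have hdist : ∀ k < N, ∀ t, ‖a (k+1) t - a k t‖ < 2 := by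
    intro k hk t
    have h1 : dist ((sk (k+1), t) : 𝕀 × 𝕀) (sk k, t) < δ := by
      rw [Prod.dist_eq]
      simp only [dist_self]
      have hdd : dist (sk (k+1)) (sk k) = 1 / N := by
        rw [Subtype.dist_eq, hskval _ (by omega), hskval _ (by omega), Real.dist_eq,
          _root_.abs_of_nonneg]
        · push_cast; field_simp; ring
        · have : (k : ℝ) / N ≤ ((k+1 : ℕ) : ℝ) / N := by
            gcongr
            push_cast; linarith
          linarith
      rw [hdd, max_eq_left (by positivity)]
      exact hinv
    have h2 := hd h1
    rw [dist_eq] at h2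
    exact h2
  have hconj_mul_self : ∀ k t, (starRingEnd ℂ) (a k t) * a k t = 1 := by
    intro k t
    rw [mul_comm, Complex.mul_conj]
    norm_cast
    rw [Complex.normSq_eq_norm_sq, habs]
    norm_num
  have hslit : ∀ k, k < N → ∀ t, a (k+1) t * (starRingEnd ℂ) (a k t) ∈ Complex.slitPlane := by
    intro k hk t
    by_contra h
    set z := a (k+1) t * (starRingEnd ℂ) (a k t) with hz
    have habsr : ‖z‖ = 1 := by
      rw [hz, norm_mul, Complex.norm_conj, habs, habs, one_mul]
    rw [Complex.mem_slitPlane_iff] at h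
    push_neg at h
    obtain ⟨hre, him⟩ := h
    have hzre : z = (z.re : ℂ) := Complex.ext rfl (by simpa using him)
    have hzeq : z = -1 := by
      rw [hzre] at habsr ⊢
      rw [Complex.norm_real, Real.norm_eq_abs, _root_.abs_of_nonpos hre] at habsr
      have : z.re = -1 := by linarith
      rw [this]; norm_num
    have hm : a (k+1) t = - a k t := by
      have h2 := congrArg (· * a k t) hzeq
      simp only [hz] at h2
      rw [mul_assoc, hconj_mul_self, mul_one] at h2
      simpa using h2
    have h3 := hdist k hk t
    rw [hm] at h3
    have h4 : ‖-(2 : ℂ) * a k t‖ < 2 := by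
      convert h3 using 2; ring
    rw [norm_mul, habs, mul_one] at h4
    simp at h4
  -- exp of arg on the unit circle
  have hexp_arg : ∀ w : ℂ, ‖w‖ = 1 → Complex.exp (Complex.arg w * Complex.I) = w := by
    intro w hw
    have := Complex.norm_mul_exp_arg_mul_I w
    rwa [hw, Complex.ofReal_one, one_mul] at this
  -- the winding sum
  set W : 𝕀 → ℝ := fun t => ∑ k ∈ Finset.range N,
    Complex.arg (a (k+1) t * (starRingEnd ℂ) (a k t)) with hW
  have haCont : ∀ k, Continuous fun t => a k t := by
    intro k
    exact G.continuous.comp (Continuous.prodMk continuous_const continuous_id)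
  have hWcont : Continuous W := by
    apply continuous_finset_sum
    intro k hk
    rw [Finset.mem_range] at hk
    rw [continuous_iff_continuousAt]
    intro t
    have h1 : Continuous fun t => a (k+1) t * (starRingEnd ℂ) (a k t) :=
      (haCont (k+1)).mul (Complex.continuous_conj.comp (haCont k))
    exact ContinuousAt.comp (x := t) (g := Complex.arg)
      (Complex.continuousAt_arg (hslit k hk t)) h1.continuousAt
  -- telescoping
  have htel : ∀ t, ∀ m ≤ N, ∏ k ∈ Finset.range m,
      (a (k+1) t * (starRingEnd ℂ) (a k t)) = a m t * (starRingEnd ℂ) (a 0 t) := by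
    intro t m hm
    induction m with
    | zero => simp [(mul_comm _ _).trans (hconj_mul_self 0 t)]
    | succ m ih =>
      rw [Finset.prod_range_succ, ih (by omega)]
      calc a m t * (starRingEnd ℂ) (a 0 t) * (a (m+1) t * (starRingEnd ℂ) (a m t))
          = a (m+1) t * ((starRingEnd ℂ) (a m t) * a m t) * (starRingEnd ℂ) (a 0 t) := by ring
        _ = a (m+1) t * (starRingEnd ℂ) (a 0 t) := by rw [hconj_mul_self, mul_one]
  have haN : ∀ t, a N t = a 0 t := by
    intro t
    have h1 : sk N = (⟨1, by norm_num⟩ : 𝕀) := by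
      apply Subtype.ext
      rw [hskval N le_rfl]
      field_simp
    have h0 : sk 0 = (⟨0, by norm_num⟩ : 𝕀) := by
      apply Subtype.ext
      rw [hskval 0 (by omega)]
      simp
    simp only [ha, h1, h0, hGapp]
    congr 2
    simpa using eC_one
  -- W t is a multiple of 2π
  have hWint : ∀ t, ∃ m : ℤ, W t = m * (2 * Real.pi) := by
    intro t
    have hexp : Complex.exp ((W t : ℝ) * Complex.I) = 1 := by
      rw [hW]
      push_cast
      rw [Finset.sum_mul, Complex.exp_sum]
      have : ∀ k ∈ Finset.range N, Complex.exp ((Complex.arg (a (k+1) t * (starRingEnd ℂ) (a k t)) : ℂ) * Complex.I)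
          = a (k+1) t * (starRingEnd ℂ) (a k t) := by
        intro k hk
        apply hexp_arg
        rw [norm_mul, Complex.norm_conj, habs, habs, one_mul]
      rw [Finset.prod_congr rfl this, htel t N le_rfl, haN, mul_comm]
      exact hconj_mul_self 0 t
    rw [Complex.exp_eq_one_iff] at hexp
    obtain ⟨m, hm⟩ := hexp
    refine ⟨m, ?_⟩
    have : ((W t : ℝ) : ℂ) = ((m * (2 * Real.pi) : ℝ) : ℂ) := by
      apply mul_right_cancel₀ Complex.I_ne_zero
      rw [hm]; push_cast; ring
    exact_mod_cast this
  -- endpoint values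
  have hW1 : W 1 = 0 := by
    rw [hW]
    apply Finset.sum_eq_zero
    intro k hk
    have hc : ∀ j, a j 1 = (c : ℂ) := by
      intro j
      simp only [ha, hGapp]
      rw [K.apply_one]
      rfl
    rw [hc, hc, Complex.mul_conj]
    have : Complex.normSq (c : ℂ) = 1 := by
      rw [Complex.normSq_eq_norm_sq]
      have h2 := c.2
      rw [Metric.mem_sphere, dist_zero_right] at h2
      rw [h2]; norm_num
    rw [this]
    simp
  have hW0 : W 0 = 2 * Real.pi := by
    rw [hW]
    have hval : ∀ k ≤ N, a k 0 = Complex.exp ((2 * Real.pi * ((k : ℝ)/N) : ℝ) * Complex.I) := by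
      intro k hk
      simp only [ha, hGapp]
      rw [K.apply_zero]
      show ((eC (sk k) : ℂ)) = _
      rw [show ((sk k : ℝ)) = (k : ℝ)/N from hskval k hk]
      rfl
    have hterm : ∀ k ∈ Finset.range N,
        Complex.arg (a (k+1) 0 * (starRingEnd ℂ) (a k 0)) = 2 * Real.pi / N := by
      intro k hk
      rw [Finset.mem_range] at hk
      rw [hval (k+1) (by omega), hval k (by omega)]
      rw [← Complex.exp_conj]
      rw [← Complex.exp_add]
      have harg : ((2 * Real.pi * (((k:ℕ)+1 : ℝ)/N) : ℝ) : ℂ) * Complex.I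
          + (starRingEnd ℂ) (((2 * Real.pi * ((k : ℝ)/N) : ℝ) : ℂ) * Complex.I)
          = ((2 * Real.pi / N : ℝ) : ℂ) * Complex.I := by
        rw [map_mul, Complex.conj_I, Complex.conj_ofReal]
        push_cast
        field_simp
        ring
      push_cast
      push_cast at harg
      rw [harg]
      rw [Complex.exp_mul_I]
      have hpos : 0 < 2 * Real.pi / N := by positivity
      have hle : 2 * Real.pi / N ≤ Real.pi := by
        rw [div_le_iff₀ hNpos]
        have : (2 : ℝ) ≤ N := by exact_mod_cast hN2
        nlinarith [Real.pi_pos]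
      have := Complex.arg_cos_add_sin_mul_I (θ := 2 * Real.pi / N)
        ⟨by linarith [Real.pi_pos], hle⟩
      push_cast at this ⊢
      convert this using 3 <;> push_cast <;> ring
    show (∑ k ∈ Finset.range N, (a (k+1) 0 * (starRingEnd ℂ) (a k 0)).arg) = 2 * Real.pi
    rw [Finset.sum_congr rfl hterm, Finset.sum_const, Finset.card_range, nsmul_eq_mul]
    field_simp
  -- intermediate value theorem: some t with W t = π
  have hrange : Set.Icc (W 1) (W 0) ⊆ Set.range W :=
    intermediate_value_univ (1 : 𝕀) (0 : 𝕀) hWcont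
  have hπ : Real.pi ∈ Set.Icc (W 1) (W 0) := by
    rw [hW0, hW1]
    constructor
    · linarith [Real.pi_pos]
    · linarith [Real.pi_pos]
  obtain ⟨t, ht⟩ := hrange hπ
  obtain ⟨m, hm⟩ := hWint t
  rw [ht] at hm
  -- π = m * 2π is impossible
  have hm2 : (1 : ℝ) = m * 2 := by
    have h2 : Real.pi * 1 = Real.pi * (m * 2) := by
      conv_lhs => rw [mul_one, hm]
      ring
    exact mul_left_cancel₀ Real.pi_ne_zero h2
  have : (1 : ℤ) = m * 2 := by exact_mod_cast hm2
  omega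

/-- The double pendulum cannot be cloned: its phase space `T*T² ≅ (S¹ × S¹) × ℝ²` admits
no continuous cloning map homotopic to the identity. -/
theorem double_pendulum_no_cloning :
    ∀ (N : Type) [TopologicalSpace N]
      (b : ((Metric.sphere (0 : ℂ) 1) × (Metric.sphere (0 : ℂ) 1)) × (ℝ × ℝ)) (r : N)
      (f : ((Metric.sphere (0 : ℂ) 1) × (Metric.sphere (0 : ℂ) 1)) × (ℝ × ℝ) → N)
      (φ : C((((Metric.sphere (0 : ℂ) 1) × (Metric.sphere (0 : ℂ) 1)) × (ℝ × ℝ)) ×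
               (((Metric.sphere (0 : ℂ) 1) × (Metric.sphere (0 : ℂ) 1)) × (ℝ × ℝ)) × N,
             (((Metric.sphere (0 : ℂ) 1) × (Metric.sphere (0 : ℂ) 1)) × (ℝ × ℝ)) ×
               (((Metric.sphere (0 : ℂ) 1) × (Metric.sphere (0 : ℂ) 1)) × (ℝ × ℝ)) × N)),
      φ.Homotopic (ContinuousMap.id _) →
      (∀ x : ((Metric.sphere (0 : ℂ) 1) × (Metric.sphere (0 : ℂ) 1)) × (ℝ × ℝ),
        φ (x, b, r) = (x, x, f x)) →
      False := by
  intro N _ b r f φ hhom hφ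
  set j : C(sCirc,
      (((Metric.sphere (0 : ℂ) 1) × (Metric.sphere (0 : ℂ) 1)) × (ℝ × ℝ)) ×
        (((Metric.sphere (0 : ℂ) 1) × (Metric.sphere (0 : ℂ) 1)) × (ℝ × ℝ)) × N) :=
    ⟨fun z => (((z, z), (0, 0)), b, r), by fun_prop⟩ with hj
  set p : C((((Metric.sphere (0 : ℂ) 1) × (Metric.sphere (0 : ℂ) 1)) × (ℝ × ℝ)) ×
        (((Metric.sphere (0 : ℂ) 1) × (Metric.sphere (0 : ℂ) 1)) × (ℝ × ℝ)) × N,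
      sCirc) :=
    ⟨fun y => y.2.1.1.1, by fun_prop⟩ with hp
  have h1 : (φ.comp j).Homotopic ((ContinuousMap.id _).comp j) :=
    ContinuousMap.Homotopic.comp hhom (ContinuousMap.Homotopic.refl j)
  have h2 : (p.comp (φ.comp j)).Homotopic (p.comp ((ContinuousMap.id _).comp j)) :=
    ContinuousMap.Homotopic.comp (ContinuousMap.Homotopic.refl p) h1
  have hid : p.comp (φ.comp j) = ContinuousMap.id sCirc := by
    ext z
    simp only [ContinuousMap.comp_apply, ContinuousMap.id_apply, hj, hp,
      ContinuousMap.coe_mk]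
    rw [hφ]
  have hconst : p.comp ((ContinuousMap.id _).comp j) = ContinuousMap.const sCirc b.1.1 := by
    ext z
    rfl
  rw [hid, hconst] at h2
  exact circle_not_contractible b.1.1 h2
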